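/- arXiv:2005.08397 — 2 statements merged into one kernel-verified Lean document; each statement's English description precedes it below -/
import Mathlib

section
/- For H ∈ (1/2, 1) and α > 0, the function F(y₁, y₂, y₃) = e^{−α|y₁−y₃|} e^{−α y₂} e^{(1−1/H)(y₁+y₂+y₃)} |e^{−y₂/H} − e^{−y₃/H}|^{2H−2} |1 − e^{−y₁/H}|^{2H−2} is integrable on (0,∞)³. -/
open MeasureTheory Real Set

/-- The basic 1D profile `y ↦ e^{cy} (1 - e^{-y/h})^s`. -/
noncomputable def auxG (c s h : ℝ) (y : ℝ) : ℝ :=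
  Real.exp (c * y) * (1 - Real.exp (-y / h)) ^ s

lemma auxG_meas (c s h : ℝ) : Measurable (auxG c s h) := by
  unfold auxG; fun_prop

lemma aux_one_sub_exp {x : ℝ} (hx : 0 ≤ x) : x * Real.exp (-x) ≤ 1 - Real.exp (-x) := by
  have h := Real.add_one_le_exp x
  have h2 : Real.exp (-x) * Real.exp x = 1 := by rw [← Real.exp_add]; simp
  nlinarith [Real.exp_pos (-x), mul_le_mul_of_nonneg_right h (Real.exp_pos (-x)).le]

lemma auxG_nonneg {c s h : ℝ} (hh : 0 < h) {y : ℝ} (hy : 0 ≤ y) : 0 ≤ auxG c s h y := by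
  have : Real.exp (-y / h) ≤ 1 := by
    rw [Real.exp_le_one_iff]
    apply div_nonpos_of_nonpos_of_nonneg <;> linarith
  exact mul_nonneg (Real.exp_pos _).le (Real.rpow_nonneg (by linarith) s)

lemma auxG_integrable {c s h : ℝ} (hc : c < 0) (hs1 : -1 < s) (hs0 : s < 0) (hh : 0 < h) :
    IntegrableOn (auxG c s h) (Ioi 0) := by
  have hmeas := auxG_meas c s h
  rw [← Ioc_union_Ioi_eq_Ioi (zero_le_one (α := ℝ))]
  apply IntegrableOn.union
  · -- on (0, 1]
    have hint : IntegrableOn (fun y : ℝ => Real.exp (-s / h) / h ^ s * y ^ s) (Ioc 0 1) := by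
      apply Integrable.const_mul
      exact (intervalIntegral.intervalIntegrable_rpow' (a := 0) (b := 1) hs1).1
    apply hint.mono' hmeas.aestronglyMeasurable
    filter_upwards [ae_restrict_mem measurableSet_Ioc] with y hy
    obtain ⟨hy0, hy1⟩ := hy
    have hyh : 0 < y / h := div_pos hy0 hh
    have hbase0 : 0 ≤ 1 - Real.exp (-y / h) := by
      have : Real.exp (-y / h) ≤ 1 := by
        rw [Real.exp_le_one_iff]
        apply div_nonpos_of_nonpos_of_nonneg <;> linarith
      linarith
    have hA : (1 - Real.exp (-y / h)) ^ s ≤ y ^ s / h ^ s * Real.exp (-s / h) := by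
      have h1 : (1 - Real.exp (-y / h)) ^ s ≤ (y / h * Real.exp (-(y / h))) ^ s := by
        apply Real.rpow_le_rpow_of_nonpos (mul_pos hyh (Real.exp_pos _)) _ hs0.le
        have := aux_one_sub_exp hyh.le
        rw [neg_div] at *
        linarith
      have h4 : Real.exp (-(y / h) * s) ≤ Real.exp (-s / h) := by
        apply Real.exp_le_exp.mpr
        rw [div_eq_mul_inv, div_eq_mul_inv]
        have hinv : (0:ℝ) ≤ h⁻¹ := (inv_pos.mpr hh).le
        nlinarith [mul_nonneg (mul_nonneg hinv (neg_nonneg.mpr hs0.le)) (sub_nonneg.mpr hy1)]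
      calc (1 - Real.exp (-y / h)) ^ s ≤ (y / h * Real.exp (-(y / h))) ^ s := h1
        _ = (y / h) ^ s * Real.exp (-(y / h) * s) := by
            rw [Real.mul_rpow hyh.le (Real.exp_pos _).le, ← Real.exp_mul]
        _ ≤ (y / h) ^ s * Real.exp (-s / h) :=
            mul_le_mul_of_nonneg_left h4 (Real.rpow_nonneg hyh.le s)
        _ = y ^ s / h ^ s * Real.exp (-s / h) := by rw [Real.div_rpow hy0.le hh.le]
    have hexp1 : Real.exp (c * y) ≤ 1 := by
      rw [Real.exp_le_one_iff]
      exact (mul_neg_of_neg_of_pos hc hy0).le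
    rw [Real.norm_eq_abs, abs_of_nonneg (auxG_nonneg hh hy0.le)]
    calc auxG c s h y = Real.exp (c * y) * (1 - Real.exp (-y / h)) ^ s := rfl
      _ ≤ 1 * (y ^ s / h ^ s * Real.exp (-s / h)) :=
          mul_le_mul hexp1 hA (Real.rpow_nonneg hbase0 s) zero_le_one
      _ = Real.exp (-s / h) / h ^ s * y ^ s := by ring
  · -- on (1, ∞)
    have hint : IntegrableOn
        (fun y : ℝ => (1 - Real.exp (-1 / h)) ^ s * Real.exp (-(-c) * y)) (Ioi 1) :=
      (exp_neg_integrableOn_Ioi 1 (neg_pos.mpr hc)).const_mul _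
    apply hint.mono' hmeas.aestronglyMeasurable
    filter_upwards [ae_restrict_mem measurableSet_Ioi] with y hy
    have hy1 : (1:ℝ) < y := hy
    have hb1 : 0 < 1 - Real.exp (-1 / h) := by
      have : Real.exp (-1 / h) < 1 := by
        rw [Real.exp_lt_one_iff]
        apply div_neg_of_neg_of_pos <;> linarith
      linarith
    have hmono : 1 - Real.exp (-1 / h) ≤ 1 - Real.exp (-y / h) := by
      have : Real.exp (-y / h) ≤ Real.exp (-1 / h) :=
        Real.exp_le_exp.mpr (div_le_div_of_nonneg_right (by linarith) hh.le)
      linarith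
    have hA : (1 - Real.exp (-y / h)) ^ s ≤ (1 - Real.exp (-1 / h)) ^ s :=
      Real.rpow_le_rpow_of_nonpos hb1 hmono hs0.le
    rw [Real.norm_eq_abs, abs_of_nonneg (auxG_nonneg hh (by linarith))]
    calc auxG c s h y = Real.exp (c * y) * (1 - Real.exp (-y / h)) ^ s := rfl
      _ ≤ Real.exp (c * y) * (1 - Real.exp (-1 / h)) ^ s :=
          mul_le_mul_of_nonneg_left hA (Real.exp_pos _).le
      _ = (1 - Real.exp (-1 / h)) ^ s * Real.exp (-(-c) * y) := by rw [neg_neg]; ring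

/-- Integrability of `x ↦ f |x|` on `ℝ` from integrability of `f` on `(0, ∞)`. -/
lemma aux_comp_abs {f : ℝ → ℝ} (hf : IntegrableOn f (Ioi 0)) :
    Integrable (fun x => f |x|) := by
  have hf' : IntegrableOn (fun x => f |x|) (Ioi 0) := by
    apply hf.congr_fun _ measurableSet_Ioi
    intro x hx
    show f x = f |x|
    rw [abs_of_pos hx]
  have int_Iic : IntegrableOn (fun x => f |x|) (Iic 0) := by
    rw [← Measure.map_neg_eq_self (volume : Measure ℝ)]
    have m : MeasurableEmbedding fun x : ℝ => -x :=
      (Homeomorph.neg ℝ).measurableEmbedding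
    rw [m.integrableOn_map_iff]
    simp_rw [Function.comp_def, abs_neg, neg_preimage, neg_Iic, neg_zero]
    exact Iff.mpr integrableOn_Ici_iff_integrableOn_Ioi hf'
  have := int_Iic.union hf'
  rwa [Iic_union_Ioi, integrableOn_univ] at this

/-- The key algebraic identity. -/
lemma aux_id {h : ℝ} (hh : 0 < h) {a b : ℝ} (hab : a ≤ b) :
    Real.exp ((1 - 1 / h) * (a + b)) * |Real.exp (-a / h) - Real.exp (-b / h)| ^ (2 * h - 2) =
      auxG (1 - 1 / h) (2 * h - 2) h |a - b| := by
  have hd : |a - b| = b - a := by rw [abs_sub_comm, abs_of_nonneg (sub_nonneg.mpr hab)]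
  have hexple : Real.exp (-b / h) ≤ Real.exp (-a / h) :=
    Real.exp_le_exp.mpr (div_le_div_of_nonneg_right (by linarith) hh.le)
  have hfac : Real.exp (-a / h) - Real.exp (-b / h) =
      Real.exp (-a / h) * (1 - Real.exp (-(b - a) / h)) := by
    rw [mul_sub, mul_one, ← Real.exp_add]
    congr 2
    field_simp
    ring
  have hle1 : Real.exp (-(b - a) / h) ≤ 1 := by
    rw [Real.exp_le_one_iff]
    apply div_nonpos_of_nonpos_of_nonneg <;> linarith
  rw [abs_of_nonneg (by linarith), hfac,
    Real.mul_rpow (Real.exp_pos _).le (by linarith),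
    ← Real.exp_mul, hd]
  unfold auxG
  rw [← mul_assoc, ← Real.exp_add]
  congr 2
  field_simp
  ring

theorem stmt5 (H α : ℝ) (hH : H ∈ Set.Ioo (1/2 : ℝ) 1) (hα : 0 < α) :
    MeasureTheory.IntegrableOn
      (fun p : ℝ × ℝ × ℝ =>
        Real.exp (-α * |p.1 - p.2.2|) * Real.exp (-α * p.2.1) *
          Real.exp ((1 - 1 / H) * (p.1 + p.2.1 + p.2.2)) *
          |Real.exp (-p.2.1 / H) - Real.exp (-p.2.2 / H)| ^ (2 * H - 2) *
          |1 - Real.exp (-p.1 / H)| ^ (2 * H - 2))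
      (Set.Ioi (0:ℝ) ×ˢ Set.Ioi (0:ℝ) ×ˢ Set.Ioi (0:ℝ)) := by
  obtain ⟨hH1, hH2⟩ := hH
  have hHpos : 0 < H := by linarith
  set c : ℝ := 1 - 1 / H with hc_def
  set s : ℝ := 2 * H - 2 with hs_def
  have hc : c < 0 := by
    have : 1 < 1 / H := by rw [lt_div_iff₀ hHpos]; linarith
    simp only [hc_def]; linarith
  have hs1 : -1 < s := by simp only [hs_def]; linarith
  have hs0 : s < 0 := by simp only [hs_def]; linarith
  -- integrability of the 1D profile
  have hg : IntegrableOn (auxG c s H) (Ioi 0) := auxG_integrable hc hs1 hs0 hHpos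
  -- the symmetrized profile is integrable on ℝ
  have hφ : Integrable (fun t : ℝ => auxG c s H |t|) := aux_comp_abs hg
  -- indicator of the exponential
  have hu : Integrable ((Ioi (0:ℝ)).indicator fun a => Real.exp (-α * a)) :=
    (integrable_indicator_iff measurableSet_Ioi).mpr (exp_neg_integrableOn_Ioi 0 hα)
  -- product on ℝ²
  have hK : Integrable
      (fun z : ℝ × ℝ =>
        ((Ioi (0:ℝ)).indicator fun a => Real.exp (-α * a)) z.1 * auxG c s H |z.2|)
      (volume : Measure (ℝ × ℝ)) := by
    rw [Measure.volume_eq_prod]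
    exact hu.mul_prod hφ
  -- measure preserving shear
  have hT : MeasurePreserving (fun z : ℝ × ℝ => (z.1, z.2 - z.1))
      (volume : Measure (ℝ × ℝ)) (volume : Measure (ℝ × ℝ)) := by
    rw [Measure.volume_eq_prod]
    exact measurePreserving_prod_sub volume volume
  have hk : Integrable
      (fun z : ℝ × ℝ =>
        ((Ioi (0:ℝ)).indicator fun a => Real.exp (-α * a)) z.1 * auxG c s H |z.2 - z.1|)
      (volume : Measure (ℝ × ℝ)) := by
    have := (hT.integrable_comp hK.aestronglyMeasurable).mpr hK
    simpa [Function.comp_def] using this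
  have hh : IntegrableOn
      (fun q : ℝ × ℝ => Real.exp (-α * q.1) * auxG c s H |q.1 - q.2|)
      (Ioi 0 ×ˢ Ioi 0) := by
    apply (hk.integrableOn).congr_fun _ (measurableSet_Ioi.prod measurableSet_Ioi)
    intro q hq
    simp only [Set.indicator_of_mem hq.1, abs_sub_comm q.2 q.1]
  -- the dominating function on ℝ³
  have hB : IntegrableOn
      (fun p : ℝ × ℝ × ℝ =>
        auxG c s H p.1 * (Real.exp (-α * p.2.1) * auxG c s H |p.2.1 - p.2.2|))
      (Ioi 0 ×ˢ Ioi 0 ×ˢ Ioi 0) := by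
    rw [IntegrableOn, Measure.volume_eq_prod, ← Measure.prod_restrict]
    exact Integrable.mul_prod hg hh
  -- measurability of F
  have hFmeas : Measurable
      (fun p : ℝ × ℝ × ℝ =>
        Real.exp (-α * |p.1 - p.2.2|) * Real.exp (-α * p.2.1) *
          Real.exp ((1 - 1 / H) * (p.1 + p.2.1 + p.2.2)) *
          |Real.exp (-p.2.1 / H) - Real.exp (-p.2.2 / H)| ^ (2 * H - 2) *
          |1 - Real.exp (-p.1 / H)| ^ (2 * H - 2)) := by fun_prop
  apply hB.mono' hFmeas.aestronglyMeasurable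
  rw [ae_restrict_iff' ((measurableSet_Ioi.prod (measurableSet_Ioi.prod measurableSet_Ioi)))]
  apply Filter.Eventually.of_forall
  rintro ⟨y₁, y₂, y₃⟩ hp
  obtain ⟨h1, h2, h3⟩ : y₁ ∈ Ioi (0:ℝ) ∧ y₂ ∈ Ioi (0:ℝ) ∧ y₃ ∈ Ioi (0:ℝ) := by
    simpa [Set.mem_prod] using hp
  simp only [Set.mem_Ioi] at h1 h2 h3
  have key : Real.exp ((1 - 1 / H) * (y₂ + y₃)) *
      |Real.exp (-y₂ / H) - Real.exp (-y₃ / H)| ^ (2 * H - 2) = auxG c s H |y₂ - y₃| := by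
    rcases le_total y₂ y₃ with hle | hle
    · exact aux_id hHpos hle
    · rw [abs_sub_comm (Real.exp (-y₂ / H)), abs_sub_comm y₂ y₃, add_comm y₂ y₃]
      exact aux_id hHpos hle
  have hFnn : (0:ℝ) ≤ Real.exp (-α * |y₁ - y₃|) * Real.exp (-α * y₂) *
      Real.exp ((1 - 1 / H) * (y₁ + y₂ + y₃)) *
      |Real.exp (-y₂ / H) - Real.exp (-y₃ / H)| ^ (2 * H - 2) *
      |1 - Real.exp (-y₁ / H)| ^ (2 * H - 2) := by positivity
  have hB1 : |1 - Real.exp (-y₁ / H)| = 1 - Real.exp (-y₁ / H) := by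
    apply abs_of_nonneg
    have : Real.exp (-y₁ / H) ≤ 1 := by
      rw [Real.exp_le_one_iff]
      apply div_nonpos_of_nonpos_of_nonneg <;> linarith
    linarith
  have e3split : Real.exp ((1 - 1 / H) * (y₁ + y₂ + y₃)) =
      Real.exp ((1 - 1 / H) * y₁) * Real.exp ((1 - 1 / H) * (y₂ + y₃)) := by
    rw [← Real.exp_add]; congr 1; ring
  have hXnn : (0:ℝ) ≤ auxG c s H y₁ * (Real.exp (-α * y₂) * auxG c s H |y₂ - y₃|) :=
    mul_nonneg (auxG_nonneg hHpos h1.le)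
      (mul_nonneg (Real.exp_pos _).le (auxG_nonneg hHpos (abs_nonneg _)))
  have hE1 : Real.exp (-α * |y₁ - y₃|) ≤ 1 := by
    rw [Real.exp_le_one_iff]
    exact mul_nonpos_of_nonpos_of_nonneg (by linarith) (abs_nonneg _)
  rw [Real.norm_eq_abs, abs_of_nonneg hFnn]
  calc Real.exp (-α * |y₁ - y₃|) * Real.exp (-α * y₂) *
      Real.exp ((1 - 1 / H) * (y₁ + y₂ + y₃)) *
      |Real.exp (-y₂ / H) - Real.exp (-y₃ / H)| ^ (2 * H - 2) *
      |1 - Real.exp (-y₁ / H)| ^ (2 * H - 2)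
      = Real.exp (-α * |y₁ - y₃|) *
        ((Real.exp ((1 - 1 / H) * y₁) * (1 - Real.exp (-y₁ / H)) ^ (2 * H - 2)) *
          (Real.exp (-α * y₂) *
            (Real.exp ((1 - 1 / H) * (y₂ + y₃)) *
              |Real.exp (-y₂ / H) - Real.exp (-y₃ / H)| ^ (2 * H - 2)))) := by
        rw [e3split, hB1]; ring
    _ = Real.exp (-α * |y₁ - y₃|) *
        (auxG c s H y₁ * (Real.exp (-α * y₂) * auxG c s H |y₂ - y₃|)) := by
        rw [key]; rfl
    _ ≤ auxG c s H y₁ * (Real.exp (-α * y₂) * auxG c s H |y₂ - y₃|) :=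
        mul_le_of_le_one_left hXnn hE1
end

section
/- Let H ∈ (1/2, 1), α > 0, and let F be as defined. Then there exists C > 0 depending only on α and H such that for all T > 0, (1/T) ∫_0^T ∫_{y₄}^{∞} ∫_0^{y₃} ∫_0^{y₂} F(y₁, y₂, y₃) dy₁ dy₂ dy₃ dy₄ ≤ (H B(1−H, 2H−1))² / (α² T). -/
open MeasureTheory Real Set

set_option maxHeartbeats 1000000

/-- The classical Beta function as an integral. -/
noncomputable def Beta (x y : ℝ) : ℝ :=
  ∫ u in Set.Ioo (0:ℝ) 1, u ^ (x - 1) * (1 - u) ^ (y - 1)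

/-- The function F of the paper. -/
noncomputable def Ffun (H α y₁ y₂ y₃ : ℝ) : ℝ :=
  Real.exp (-α * |y₁ - y₃|) * Real.exp (-α * y₂) *
    Real.exp ((1 - 1 / H) * (y₁ + y₂ + y₃)) *
    |Real.exp (-y₂ / H) - Real.exp (-y₃ / H)| ^ (2 * H - 2) *
    |1 - Real.exp (-y₁ / H)| ^ (2 * H - 2)

noncomputable def gfun (H x : ℝ) : ℝ :=
  Real.exp ((1 - 1 / H) * x) * (1 - Real.exp (-x / H)) ^ (2 * H - 2)

lemma Ffun_nonneg (H α y₁ y₂ y₃ : ℝ) : 0 ≤ Ffun H α y₁ y₂ y₃ := by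
  unfold Ffun; positivity

lemma gfun_nonneg {H : ℝ} (hH : 0 < H) {x : ℝ} (hx : 0 ≤ x) : 0 ≤ gfun H x := by
  apply mul_nonneg (exp_pos _).le
  apply rpow_nonneg
  rw [sub_nonneg]
  exact exp_le_one_iff.mpr (div_nonpos_of_nonpos_of_nonneg (neg_nonpos.2 hx) hH.le)

lemma phi_integrable {H : ℝ} (hH : H ∈ Ioo (1/2 : ℝ) 1) :
    IntegrableOn (fun u : ℝ => u ^ (-H) * (1 - u) ^ (2 * H - 2)) (Ioo 0 1) := by
  obtain ⟨h1, h2⟩ := hH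
  have hc := (Complex.betaIntegral_convergent (u := ((1 - H : ℝ) : ℂ))
      (v := ((2*H - 1 : ℝ) : ℂ)) (by simp; linarith) (by simp; linarith)).norm
  have hc' : IntegrableOn
      (fun x : ℝ => ‖(x : ℂ) ^ (((1 - H : ℝ) : ℂ) - 1) * (1 - (x : ℂ)) ^ (((2*H - 1 : ℝ) : ℂ) - 1)‖)
      (Ioo 0 1) := by
    rw [← intervalIntegrable_iff_integrableOn_Ioo_of_le zero_le_one]
    exact hc
  apply hc'.congr_fun _ measurableSet_Ioo
  intro x hx
  obtain ⟨hx0, hx1⟩ := hx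
  simp only []
  rw [norm_mul]
  rw [show (1 - (x : ℂ)) = ((1 - x : ℝ) : ℂ) by push_cast; ring]
  rw [Complex.norm_cpow_eq_rpow_re_of_pos hx0, Complex.norm_cpow_eq_rpow_re_of_pos (by linarith)]
  norm_num
  exact Or.inl (by ring_nf)

lemma gfun_integrable_and_eq {H : ℝ} (hH : H ∈ Ioo (1/2:ℝ) 1) :
    IntegrableOn (gfun H) (Ioi 0) ∧
      ∫ x in Ioi (0:ℝ), gfun H x
        = H * ∫ u in Ioo (0:ℝ) 1, u ^ (-H) * (1 - u) ^ (2*H - 2) := by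
  obtain ⟨h1, h2⟩ := hH
  have hH0 : 0 < H := by linarith
  set f : ℝ → ℝ := fun x => Real.exp (-x / H) with hf
  set f' : ℝ → ℝ := fun x => Real.exp (-x / H) * (-1 / H) with hf'
  have hderiv : ∀ x ∈ Ioi (0:ℝ), HasDerivWithinAt f (f' x) (Ioi 0) x := by
    intro x _
    exact (((hasDerivAt_id x).neg.div_const H).exp).hasDerivWithinAt
  have hinj : InjOn f (Ioi 0) := by
    intro a _ b _ hab
    have h := Real.exp_injective hab
    field_simp at h
    linarith
  have himg : f '' (Ioi 0) = Ioo 0 1 := by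
    ext u
    simp only [mem_image, mem_Ioi, mem_Ioo]
    constructor
    · rintro ⟨x, hx, rfl⟩
      refine ⟨exp_pos _, ?_⟩
      rw [← Real.exp_zero]
      exact Real.exp_lt_exp.mpr (div_neg_of_neg_of_pos (by linarith) hH0)
    · rintro ⟨hu0, hu1⟩
      refine ⟨-H * Real.log u, ?_, ?_⟩
      · have hl : Real.log u < 0 := Real.log_neg hu0 hu1
        nlinarith
      · show Real.exp (-(-H * Real.log u) / H) = u
        rw [show -(-H * Real.log u) / H = Real.log u by field_simp]
        exact Real.exp_log hu0
  have key : ∀ x : ℝ, |f' x| • ((f x) ^ (-H) * (1 - f x) ^ (2*H-2)) = H⁻¹ * gfun H x := by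
    intro x
    have e1 : (Real.exp (-x / H)) ^ (-H) = Real.exp x := by
      rw [← Real.exp_mul]
      congr 1
      field_simp
    have e2 : |f' x| = Real.exp (-x/H) * H⁻¹ := by
      rw [hf']
      simp only []
      rw [abs_mul, abs_of_pos (exp_pos _), abs_of_neg (div_neg_of_neg_of_pos (by norm_num) hH0)]
      ring
    rw [smul_eq_mul, e2]
    show Real.exp (-x/H) * H⁻¹ * ((Real.exp (-x/H)) ^ (-H) * (1 - Real.exp (-x/H)) ^ (2*H-2))
        = H⁻¹ * gfun H x
    rw [e1, gfun, show (1 - 1/H) * x = -x/H + x by field_simp; ring, Real.exp_add]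
    ring
  have hiff := integrableOn_image_iff_integrableOn_abs_deriv_smul measurableSet_Ioi hderiv hinj
    (fun u : ℝ => u ^ (-H) * (1-u) ^ (2*H-2))
  rw [himg] at hiff
  have hint2 := hiff.mp (phi_integrable ⟨h1, h2⟩)
  have hfun : (fun x => |f' x| • ((f x) ^ (-H) * (1 - f x) ^ (2*H-2)))
      = fun x => H⁻¹ * gfun H x := funext key
  rw [hfun] at hint2
  have hgint : IntegrableOn (gfun H) (Ioi 0) := by
    have h3 := hint2.const_mul H
    have heq : (fun x => H * (H⁻¹ * gfun H x)) = gfun H := by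
      funext x; field_simp
    rwa [heq] at h3
  refine ⟨hgint, ?_⟩
  have hval := integral_image_eq_integral_abs_deriv_smul measurableSet_Ioi hderiv hinj
    (fun u : ℝ => u ^ (-H) * (1-u) ^ (2*H-2))
  rw [himg] at hval
  rw [hval, hfun, integral_const_mul]
  field_simp

lemma Ffun_eq {H α y₁ y₂ y₃ : ℝ} (hH : H ∈ Ioo (1/2:ℝ) 1) (h1 : 0 ≤ y₁)
    (h2 : 0 ≤ y₂) (h23 : y₂ ≤ y₃) :
    Ffun H α y₁ y₂ y₃
      = Real.exp (-α * |y₁ - y₃|) * Real.exp (-α * y₂) * (gfun H y₁ * gfun H (y₃ - y₂)) := by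
  have hH0 : 0 < H := by linarith [hH.1]
  have ha : |1 - Real.exp (-y₁ / H)| = 1 - Real.exp (-y₁ / H) :=
    abs_of_nonneg (sub_nonneg.2 (exp_le_one_iff.mpr
      (div_nonpos_of_nonpos_of_nonneg (neg_nonpos.2 h1) hH0.le)))
  have hb : |Real.exp (-y₂ / H) - Real.exp (-y₃ / H)|
      = Real.exp (-y₂ / H) * (1 - Real.exp (-(y₃ - y₂) / H)) := by
    rw [abs_of_nonneg (sub_nonneg.2 (exp_le_exp.mpr
      ((div_le_div_iff_of_pos_right hH0).mpr (by linarith))))]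
    rw [mul_sub, mul_one, ← Real.exp_add]
    have harg : -y₂/H + -(y₃ - y₂)/H = -y₃/H := by field_simp; ring
    rw [harg]
  unfold Ffun gfun
  rw [ha, hb, Real.mul_rpow (exp_pos _).le
    (sub_nonneg.2 (exp_le_one_iff.mpr
      (div_nonpos_of_nonpos_of_nonneg (neg_nonpos.2 (by linarith)) hH0.le))),
    ← Real.exp_mul]
  have key : Real.exp ((1-1/H)*(y₁+y₂+y₃)) * Real.exp (-y₂/H*(2*H-2))
      = Real.exp ((1-1/H)*y₁) * Real.exp ((1-1/H)*(y₃-y₂)) := by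
    rw [← Real.exp_add, ← Real.exp_add]
    congr 1
    field_simp
    ring
  linear_combination (Real.exp (-α*|y₁-y₃|) * Real.exp (-α*y₂) *
    (1 - Real.exp (-(y₃-y₂)/H)) ^ (2*H-2) * (1 - Real.exp (-y₁/H)) ^ (2*H-2)) * key

theorem stmt6 (H α : ℝ) (hH : H ∈ Set.Ioo (1/2 : ℝ) 1) (hα : 0 < α)
    (T : ℝ) (hT : 0 < T) :
    (1 / T) * (∫ y₄ in (0:ℝ)..T, ∫ y₃ in Set.Ioi y₄,
        ∫ y₂ in Set.Ioo (0:ℝ) y₃, ∫ y₁ in Set.Ioo (0:ℝ) y₂, Ffun H α y₁ y₂ y₃)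
      ≤ (H * Beta (1 - H) (2 * H - 1)) ^ 2 / (α ^ 2 * T) := by
  obtain ⟨h1, h2⟩ := hH
  have hH0 : 0 < H := by linarith
  obtain ⟨hgint, hgval⟩ := gfun_integrable_and_eq ⟨h1, h2⟩
  set G := ∫ x in Ioi (0:ℝ), gfun H x with hG
  have hGnn : 0 ≤ G :=
    setIntegral_nonneg measurableSet_Ioi fun x hx => gfun_nonneg hH0 (le_of_lt hx)
  have htail : ∀ b : ℝ, ∫ x in Ioo (0:ℝ) b, gfun H x ≤ G := by
    intro b
    apply setIntegral_mono_set hgint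
    · filter_upwards [ae_restrict_mem measurableSet_Ioi] with x hx
      exact gfun_nonneg hH0 hx.le
    · exact HasSubset.Subset.eventuallyLE Ioo_subset_Ioi_self
  -- Step 1
  have step1 : ∀ y₂ y₃ : ℝ, 0 < y₂ → y₂ < y₃ →
      (∫ y₁ in Ioo (0:ℝ) y₂, Ffun H α y₁ y₂ y₃)
        ≤ Real.exp (-α * y₃) * gfun H (y₃ - y₂) * G := by
    intro y₂ y₃ hy2 hy23
    have hg2 : 0 ≤ gfun H (y₃ - y₂) := gfun_nonneg hH0 (by linarith)
    calc (∫ y₁ in Ioo (0:ℝ) y₂, Ffun H α y₁ y₂ y₃)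
        ≤ ∫ y₁ in Ioo (0:ℝ) y₂, Real.exp (-α * y₃) * gfun H (y₃ - y₂) * gfun H y₁ := by
          apply integral_mono_of_nonneg
          · exact Filter.Eventually.of_forall fun y₁ => Ffun_nonneg H α y₁ y₂ y₃
          · exact (hgint.mono_set Ioo_subset_Ioi_self).const_mul _
          · filter_upwards [ae_restrict_mem measurableSet_Ioo] with y₁ hy₁
            obtain ⟨hy10, hy12⟩ := hy₁
            rw [Ffun_eq ⟨h1, h2⟩ hy10.le hy2.le hy23.le]
            have habs : |y₁ - y₃| = y₃ - y₁ := by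
              rw [abs_of_neg (by linarith)]; ring
            have hexp : Real.exp (-α * |y₁ - y₃|) * Real.exp (-α * y₂) ≤ Real.exp (-α * y₃) := by
              rw [habs, ← Real.exp_add]
              apply Real.exp_le_exp.mpr
              nlinarith
            calc Real.exp (-α*|y₁-y₃|) * Real.exp (-α*y₂) * (gfun H y₁ * gfun H (y₃-y₂))
                ≤ Real.exp (-α*y₃) * (gfun H y₁ * gfun H (y₃-y₂)) :=
                  mul_le_mul_of_nonneg_right hexp
                    (mul_nonneg (gfun_nonneg hH0 hy10.le) hg2)
              _ = Real.exp (-α*y₃) * gfun H (y₃-y₂) * gfun H y₁ := by ring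
      _ = Real.exp (-α * y₃) * gfun H (y₃ - y₂) * ∫ y₁ in Ioo (0:ℝ) y₂, gfun H y₁ :=
          integral_const_mul _ _
      _ ≤ Real.exp (-α * y₃) * gfun H (y₃ - y₂) * G :=
          mul_le_mul_of_nonneg_left (htail y₂) (mul_nonneg (exp_pos _).le hg2)
  -- Step 2
  have step2 : ∀ y₃ : ℝ, 0 < y₃ →
      (∫ y₂ in Ioo (0:ℝ) y₃, ∫ y₁ in Ioo (0:ℝ) y₂, Ffun H α y₁ y₂ y₃)
        ≤ Real.exp (-α * y₃) * G * G := by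
    intro y₃ hy3
    have hrefl : IntegrableOn (fun y₂ => gfun H (y₃ - y₂)) (Ioo 0 y₃) := by
      have hi : IntervalIntegrable (gfun H) volume 0 y₃ :=
        (intervalIntegrable_iff_integrableOn_Ioo_of_le hy3.le).mpr
          (hgint.mono_set Ioo_subset_Ioi_self)
      have h' := hi.comp_sub_left y₃
      rw [sub_zero, sub_self] at h'
      exact (intervalIntegrable_iff_integrableOn_Ioo_of_le hy3.le).mp h'.symm
    have hval2 : (∫ y₂ in Ioo (0:ℝ) y₃, gfun H (y₃ - y₂)) = ∫ y₂ in Ioo (0:ℝ) y₃, gfun H y₂ := by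
      rw [← integral_Ioc_eq_integral_Ioo, ← integral_Ioc_eq_integral_Ioo,
        ← intervalIntegral.integral_of_le hy3.le, ← intervalIntegral.integral_of_le hy3.le,
        intervalIntegral.integral_comp_sub_left (gfun H) y₃, sub_self, sub_zero]
    calc (∫ y₂ in Ioo (0:ℝ) y₃, ∫ y₁ in Ioo (0:ℝ) y₂, Ffun H α y₁ y₂ y₃)
        ≤ ∫ y₂ in Ioo (0:ℝ) y₃, Real.exp (-α*y₃) * gfun H (y₃ - y₂) * G := by
          apply integral_mono_of_nonneg
          · exact Filter.Eventually.of_forall fun y₂ =>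
              integral_nonneg fun y₁ => Ffun_nonneg H α y₁ y₂ y₃
          · exact (hrefl.const_mul _).mul_const _
          · filter_upwards [ae_restrict_mem measurableSet_Ioo] with y₂ hy₂
            exact step1 y₂ y₃ hy₂.1 hy₂.2
      _ = Real.exp (-α*y₃) * (∫ y₂ in Ioo (0:ℝ) y₃, gfun H (y₃ - y₂)) * G := by
          rw [integral_mul_const, integral_const_mul]
      _ = Real.exp (-α*y₃) * (∫ y₂ in Ioo (0:ℝ) y₃, gfun H y₂) * G := by rw [hval2]
      _ ≤ Real.exp (-α*y₃) * G * G :=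
          mul_le_mul_of_nonneg_right
            (mul_le_mul_of_nonneg_left (htail y₃) (exp_pos _).le) hGnn
  -- Step 3
  have hexpval : ∀ a : ℝ, (∫ x in Ioi a, Real.exp (-α * x)) = Real.exp (-α * a) / α := by
    intro a
    have h := integral_comp_mul_left_Ioi (fun x => Real.exp (-x)) a hα
    simp only [integral_exp_neg_Ioi, smul_eq_mul] at h
    have heq : (fun x : ℝ => Real.exp (-α * x)) = fun x : ℝ => Real.exp (-(α * x)) := by
      funext x; ring_nf
    rw [heq]
    rw [h]
    rw [show -α * a = -(α * a) by ring]
    field_simp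
  have step3 : ∀ y₄ : ℝ, 0 < y₄ →
      (∫ y₃ in Ioi y₄, ∫ y₂ in Ioo (0:ℝ) y₃, ∫ y₁ in Ioo (0:ℝ) y₂, Ffun H α y₁ y₂ y₃)
        ≤ G * G * (Real.exp (-α * y₄) / α) := by
    intro y₄ hy4
    calc (∫ y₃ in Ioi y₄, ∫ y₂ in Ioo (0:ℝ) y₃, ∫ y₁ in Ioo (0:ℝ) y₂, Ffun H α y₁ y₂ y₃)
        ≤ ∫ y₃ in Ioi y₄, Real.exp (-α * y₃) * G * G := by
          apply integral_mono_of_nonneg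
          · exact Filter.Eventually.of_forall fun y₃ =>
              integral_nonneg fun y₂ => integral_nonneg fun y₁ => Ffun_nonneg H α y₁ y₂ y₃
          · exact ((exp_neg_integrableOn_Ioi y₄ hα).mul_const _).mul_const _
          · filter_upwards [ae_restrict_mem measurableSet_Ioi] with y₃ hy₃
            exact step2 y₃ (lt_trans hy4 hy₃)
      _ = (∫ y₃ in Ioi y₄, Real.exp (-α * y₃)) * G * G := by
          rw [integral_mul_const, integral_mul_const]
      _ = G * G * (Real.exp (-α * y₄) / α) := by rw [hexpval]; ring
  -- Step 4
  have hOuter : (∫ y₄ in (0:ℝ)..T, ∫ y₃ in Ioi y₄,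
      ∫ y₂ in Ioo (0:ℝ) y₃, ∫ y₁ in Ioo (0:ℝ) y₂, Ffun H α y₁ y₂ y₃) ≤ G * G / α ^ 2 := by
    rw [intervalIntegral.integral_of_le hT.le]
    have hIocle : (∫ y₄ in Ioc (0:ℝ) T, Real.exp (-α * y₄))
        ≤ ∫ y₄ in Ioi (0:ℝ), Real.exp (-α * y₄) := by
      apply setIntegral_mono_set (exp_neg_integrableOn_Ioi 0 hα)
        (Filter.Eventually.of_forall fun x => (exp_pos _).le)
        (HasSubset.Subset.eventuallyLE Ioc_subset_Ioi_self)
    calc (∫ y₄ in Ioc (0:ℝ) T, ∫ y₃ in Ioi y₄,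
          ∫ y₂ in Ioo (0:ℝ) y₃, ∫ y₁ in Ioo (0:ℝ) y₂, Ffun H α y₁ y₂ y₃)
        ≤ ∫ y₄ in Ioc (0:ℝ) T, G * G * (Real.exp (-α * y₄) / α) := by
          apply integral_mono_of_nonneg
          · exact Filter.Eventually.of_forall fun y₄ => integral_nonneg fun y₃ =>
              integral_nonneg fun y₂ => integral_nonneg fun y₁ => Ffun_nonneg H α y₁ y₂ y₃
          · exact Continuous.integrableOn_Ioc (by fun_prop)
          · filter_upwards [ae_restrict_mem measurableSet_Ioc] with y₄ hy₄
            exact step3 y₄ hy₄.1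
      _ = G * G / α * ∫ y₄ in Ioc (0:ℝ) T, Real.exp (-α * y₄) := by
          simp_rw [show ∀ y : ℝ, G * G * (Real.exp (-α*y)/α) = G*G/α * Real.exp (-α*y)
            from fun y => by ring]
          rw [integral_const_mul]
      _ ≤ G * G / α * (Real.exp (-α * 0) / α) := by
          apply mul_le_mul_of_nonneg_left _ (by positivity)
          rw [← hexpval 0]
          exact hIocle
      _ = G * G / α ^ 2 := by
          norm_num
          ring
  have hBeta : Beta (1 - H) (2*H - 1) = ∫ u in Ioo (0:ℝ) 1, u ^ (-H) * (1 - u) ^ (2*H - 2) := by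
    unfold Beta
    simp only [show (1 : ℝ) - H - 1 = -H by ring, show (2*H - 1 - 1 : ℝ) = 2*H - 2 by ring]
  have hGeq : G = H * Beta (1 - H) (2*H - 1) := by rw [hgval, hBeta]
  calc (1 / T) * (∫ y₄ in (0:ℝ)..T, ∫ y₃ in Ioi y₄,
        ∫ y₂ in Ioo (0:ℝ) y₃, ∫ y₁ in Ioo (0:ℝ) y₂, Ffun H α y₁ y₂ y₃)
      ≤ (1 / T) * (G * G / α ^ 2) := by
        apply mul_le_mul_of_nonneg_left hOuter (by positivity)
    _ = (H * Beta (1 - H) (2 * H - 1)) ^ 2 / (α ^ 2 * T) := by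
        rw [hGeq]
        field_simp
end
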